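/- Let N, d ∈ ℕ and let G₁, …, G_d be N×N complex matrices such that each matrix 2·G_k satisfies the row condition: every row of 2·G_k either has exactly one non-zero entry and that entry lies in S₁, or has exactly two non-zero entries and both lie in S₂. Let U = G_d · G_{d−1} ⋯ G₁. Then for every pair of indices (r, s) there exist integers a, b, c, e with 2^d · U(r, s) = a + b·i + c·√2 + e·i·√2 and a² + b² + 2c² + 2e² ≤ 8^d (i.e. ‖2^d·U(r,s)‖ ≤ 2^{1.5·d}). -/

import Mathlib

noncomputable def S1 : Set ℂ :=
  {2, -2, 2 * Complex.I, -(2 * Complex.I),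
   (Real.sqrt 2 : ℂ) + Complex.I * (Real.sqrt 2 : ℂ),
   (Real.sqrt 2 : ℂ) - Complex.I * (Real.sqrt 2 : ℂ),
   -(Real.sqrt 2 : ℂ) + Complex.I * (Real.sqrt 2 : ℂ),
   -(Real.sqrt 2 : ℂ) - Complex.I * (Real.sqrt 2 : ℂ)}

noncomputable def S2 : Set ℂ :=
  {(Real.sqrt 2 : ℂ), -(Real.sqrt 2 : ℂ),
   Complex.I * (Real.sqrt 2 : ℂ), -(Complex.I * (Real.sqrt 2 : ℂ)),
   1 + Complex.I, 1 - Complex.I}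

noncomputable def rt : ℂ := ((Real.sqrt 2 : ℝ) : ℂ)

lemma rt_mul_rt : rt * rt = 2 := by
  rw [rt, ← Complex.ofReal_mul, Real.mul_self_sqrt (by norm_num)]
  norm_num

def Good (B : ℤ) (z : ℂ) : Prop :=
  ∃ a b c e : ℤ, z = (a : ℂ) + (b : ℂ) * Complex.I + (c : ℂ) * rt +
      (e : ℂ) * Complex.I * rt ∧ a ^ 2 + b ^ 2 + 2 * c ^ 2 + 2 * e ^ 2 ≤ B

lemma good_mono {B B' : ℤ} (h : B ≤ B') {z : ℂ} (hz : Good B z) : Good B' z := by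
  obtain ⟨a, b, c, e, h1, h2⟩ := hz
  exact ⟨a, b, c, e, h1, h2.trans h⟩

lemma good_add {B₁ B₂ : ℤ} {x y : ℂ} (hx : Good B₁ x) (hy : Good B₂ y) :
    Good (2 * B₁ + 2 * B₂) (x + y) := by
  obtain ⟨a, b, c, e, h1, h2⟩ := hx
  obtain ⟨a', b', c', e', h1', h2'⟩ := hy
  refine ⟨a + a', b + b', c + c', e + e', by rw [h1, h1']; push_cast; ring, ?_⟩
  nlinarith [sq_nonneg (a - a'), sq_nonneg (b - b'), sq_nonneg (c - c'), sq_nonneg (e - e')]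

lemma mul_expand (p q u v a b c e : ℤ) :
    ((p : ℂ) + q * Complex.I + u * rt + v * Complex.I * rt) *
      ((a : ℂ) + b * Complex.I + c * rt + e * Complex.I * rt) =
    ((p*a - q*b + 2*u*c - 2*v*e : ℤ) : ℂ)
      + ((p*b + q*a + 2*u*e + 2*v*c : ℤ) : ℂ) * Complex.I
      + ((p*c + u*a - q*e - v*b : ℤ) : ℂ) * rt
      + ((p*e + v*a + q*c + u*b : ℤ) : ℂ) * Complex.I * rt := by
  push_cast
  linear_combination ((q*b : ℂ) + ((q:ℂ)*e + v*b) * rt + (v:ℂ)*e*(rt*rt)) * Complex.I_mul_I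
    + (((u:ℂ)*c - (v:ℂ)*e + ((u:ℂ)*e + (v:ℂ)*c) * Complex.I)) * rt_mul_rt

lemma good_mul (p q u v B : ℤ) (h0 : p * u + q * v = 0) (z : ℂ) (h : Good B z) :
    Good ((p^2 + q^2 + 2*u^2 + 2*v^2) * B)
      (((p : ℂ) + q * Complex.I + u * rt + v * Complex.I * rt) * z) := by
  obtain ⟨a, b, c, e, hz, hB⟩ := h
  refine ⟨p*a - q*b + 2*u*c - 2*v*e, p*b + q*a + 2*u*e + 2*v*c,
    p*c + u*a - q*e - v*b, p*e + v*a + q*c + u*b, by rw [hz, mul_expand], ?_⟩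
  have key : (p*a - q*b + 2*u*c - 2*v*e)^2 + (p*b + q*a + 2*u*e + 2*v*c)^2
      + 2*(p*c + u*a - q*e - v*b)^2 + 2*(p*e + v*a + q*c + u*b)^2
      = (p^2 + q^2 + 2*u^2 + 2*v^2) * (a^2 + b^2 + 2*c^2 + 2*e^2) := by
    linear_combination (8*a*c + 8*b*e) * h0
  rw [key]
  have hw : (0:ℤ) ≤ p^2 + q^2 + 2*u^2 + 2*v^2 := by positivity
  exact mul_le_mul_of_nonneg_left hB hw

lemma good_S1 {m : ℂ} (hm : m ∈ S1) {B : ℤ} {z : ℂ} (h : Good B z) :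
    Good (4 * B) (m * z) := by
  simp only [S1, Set.mem_insert_iff, Set.mem_singleton_iff] at hm
  have I2 := Complex.I_mul_I
  rcases hm with h' | h' | h' | h' | h' | h' | h' | h' <;> subst h'
  · have := good_mul 2 0 0 0 B (by ring) z h
    have h2 : ((2:ℤ):ℂ) + ((0:ℤ):ℂ) * Complex.I + ((0:ℤ):ℂ) * rt + ((0:ℤ):ℂ) * Complex.I * rt
        = 2 := by push_cast; ring
    rw [h2] at this
    exact good_mono (by norm_num) this
  · have := good_mul (-2) 0 0 0 B (by ring) z h
    have h2 : ((-2:ℤ):ℂ) + ((0:ℤ):ℂ) * Complex.I + ((0:ℤ):ℂ) * rt + ((0:ℤ):ℂ) * Complex.I * rt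
        = -2 := by push_cast; ring
    rw [h2] at this
    exact good_mono (by norm_num) this
  · have := good_mul 0 2 0 0 B (by ring) z h
    have h2 : ((0:ℤ):ℂ) + ((2:ℤ):ℂ) * Complex.I + ((0:ℤ):ℂ) * rt + ((0:ℤ):ℂ) * Complex.I * rt
        = 2 * Complex.I := by push_cast; ring
    rw [h2] at this
    exact good_mono (by norm_num) this
  · have := good_mul 0 (-2) 0 0 B (by ring) z h
    have h2 : ((0:ℤ):ℂ) + ((-2:ℤ):ℂ) * Complex.I + ((0:ℤ):ℂ) * rt + ((0:ℤ):ℂ) * Complex.I * rt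
        = -(2 * Complex.I) := by push_cast; ring
    rw [h2] at this
    exact good_mono (by norm_num) this
  · have := good_mul 0 0 1 1 B (by ring) z h
    have h2 : ((0:ℤ):ℂ) + ((0:ℤ):ℂ) * Complex.I + ((1:ℤ):ℂ) * rt + ((1:ℤ):ℂ) * Complex.I * rt
        = (Real.sqrt 2 : ℂ) + Complex.I * (Real.sqrt 2 : ℂ) := by rw [rt]; push_cast; ring
    rw [h2] at this
    exact good_mono (by norm_num) this
  · have := good_mul 0 0 1 (-1) B (by ring) z h
    have h2 : ((0:ℤ):ℂ) + ((0:ℤ):ℂ) * Complex.I + ((1:ℤ):ℂ) * rt + ((-1:ℤ):ℂ) * Complex.I * rt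
        = (Real.sqrt 2 : ℂ) - Complex.I * (Real.sqrt 2 : ℂ) := by rw [rt]; push_cast; ring
    rw [h2] at this
    exact good_mono (by norm_num) this
  · have := good_mul 0 0 (-1) 1 B (by ring) z h
    have h2 : ((0:ℤ):ℂ) + ((0:ℤ):ℂ) * Complex.I + ((-1:ℤ):ℂ) * rt + ((1:ℤ):ℂ) * Complex.I * rt
        = -(Real.sqrt 2 : ℂ) + Complex.I * (Real.sqrt 2 : ℂ) := by rw [rt]; push_cast; ring
    rw [h2] at this
    exact good_mono (by norm_num) this
  · have := good_mul 0 0 (-1) (-1) B (by ring) z h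
    have h2 : ((0:ℤ):ℂ) + ((0:ℤ):ℂ) * Complex.I + ((-1:ℤ):ℂ) * rt + ((-1:ℤ):ℂ) * Complex.I * rt
        = -(Real.sqrt 2 : ℂ) - Complex.I * (Real.sqrt 2 : ℂ) := by rw [rt]; push_cast; ring
    rw [h2] at this
    exact good_mono (by norm_num) this

lemma good_S2 {m : ℂ} (hm : m ∈ S2) {B : ℤ} {z : ℂ} (h : Good B z) :
    Good (2 * B) (m * z) := by
  simp only [S2, Set.mem_insert_iff, Set.mem_singleton_iff] at hm
  rcases hm with h' | h' | h' | h' | h' | h' <;> subst h'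
  · have := good_mul 0 0 1 0 B (by ring) z h
    have h2 : ((0:ℤ):ℂ) + ((0:ℤ):ℂ) * Complex.I + ((1:ℤ):ℂ) * rt + ((0:ℤ):ℂ) * Complex.I * rt
        = (Real.sqrt 2 : ℂ) := by rw [rt]; push_cast; ring
    rw [h2] at this
    exact good_mono (by norm_num) this
  · have := good_mul 0 0 (-1) 0 B (by ring) z h
    have h2 : ((0:ℤ):ℂ) + ((0:ℤ):ℂ) * Complex.I + ((-1:ℤ):ℂ) * rt + ((0:ℤ):ℂ) * Complex.I * rt
        = -(Real.sqrt 2 : ℂ) := by rw [rt]; push_cast; ring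
    rw [h2] at this
    exact good_mono (by norm_num) this
  · have := good_mul 0 0 0 1 B (by ring) z h
    have h2 : ((0:ℤ):ℂ) + ((0:ℤ):ℂ) * Complex.I + ((0:ℤ):ℂ) * rt + ((1:ℤ):ℂ) * Complex.I * rt
        = Complex.I * (Real.sqrt 2 : ℂ) := by rw [rt]; push_cast; ring
    rw [h2] at this
    exact good_mono (by norm_num) this
  · have := good_mul 0 0 0 (-1) B (by ring) z h
    have h2 : ((0:ℤ):ℂ) + ((0:ℤ):ℂ) * Complex.I + ((0:ℤ):ℂ) * rt + ((-1:ℤ):ℂ) * Complex.I * rt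
        = -(Complex.I * (Real.sqrt 2 : ℂ)) := by rw [rt]; push_cast; ring
    rw [h2] at this
    exact good_mono (by norm_num) this
  · have := good_mul 1 1 0 0 B (by ring) z h
    have h2 : ((1:ℤ):ℂ) + ((1:ℤ):ℂ) * Complex.I + ((0:ℤ):ℂ) * rt + ((0:ℤ):ℂ) * Complex.I * rt
        = 1 + Complex.I := by push_cast; ring
    rw [h2] at this
    exact good_mono (by norm_num) this
  · have := good_mul 1 (-1) 0 0 B (by ring) z h
    have h2 : ((1:ℤ):ℂ) + ((-1:ℤ):ℂ) * Complex.I + ((0:ℤ):ℂ) * rt + ((0:ℤ):ℂ) * Complex.I * rt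
        = 1 - Complex.I := by push_cast; ring
    rw [h2] at this
    exact good_mono (by norm_num) this

/-- Every row has exactly one non-zero entry lying in `S1`, or exactly two
non-zero entries both lying in `S2`. -/
def RowCond {n : Type*} (M : Matrix n n ℂ) : Prop :=
  ∀ r, (∃ j₀, M r j₀ ≠ 0 ∧ M r j₀ ∈ S1 ∧ ∀ j, j ≠ j₀ → M r j = 0) ∨
       (∃ j₁ j₂, j₁ ≠ j₂ ∧ M r j₁ ≠ 0 ∧ M r j₂ ≠ 0 ∧
          M r j₁ ∈ S2 ∧ M r j₂ ∈ S2 ∧ ∀ j, j ≠ j₁ → j ≠ j₂ → M r j = 0)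

lemma key_list (N : ℕ) :
    ∀ L : List (Matrix (Fin N) (Fin N) ℂ),
      (∀ M ∈ L, RowCond ((2 : ℂ) • M)) →
      ∀ r s, Good (8 ^ L.length) ((2 : ℂ) ^ L.length * L.prod r s)
  | [], _, r, s => by
      simp only [List.prod_nil, List.length_nil, pow_zero, one_mul]
      rw [Matrix.one_apply]
      by_cases h : r = s
      · simp only [h, if_true]
        exact ⟨1, 0, 0, 0, by push_cast; ring, by norm_num⟩
      · simp only [h, if_false]
        exact ⟨0, 0, 0, 0, by push_cast; ring, by norm_num⟩
  | M :: L, hL, r, s => by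
      have ih := key_list N L (fun M' hM' => hL M' (List.mem_cons_of_mem _ hM'))
      have hM : RowCond ((2 : ℂ) • M) := hL M List.mem_cons_self
      have hpow : (0:ℤ) ≤ 8 ^ L.length := by positivity
      simp only [List.prod_cons, List.length_cons]
      have hval : (2:ℂ) ^ (L.length + 1) * (M * L.prod) r s
          = ∑ j, ((2:ℂ) • M) r j * ((2:ℂ) ^ L.length * L.prod j s) := by
        rw [Matrix.mul_apply, Finset.mul_sum]
        refine Finset.sum_congr rfl (fun j _ => ?_)
        simp only [Matrix.smul_apply, smul_eq_mul]
        ring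
      rw [hval]
      rcases hM r with ⟨j₀, _, hS1, hz⟩ | ⟨j₁, j₂, hne, _, _, hS2a, hS2b, hz⟩
      · have hsum : (∑ j, ((2:ℂ) • M) r j * ((2:ℂ) ^ L.length * L.prod j s))
            = ((2:ℂ) • M) r j₀ * ((2:ℂ) ^ L.length * L.prod j₀ s) := by
          refine Finset.sum_eq_single j₀ (fun b _ hb => ?_) (fun h => absurd (Finset.mem_univ j₀) h)
          rw [hz b hb, zero_mul]
        rw [hsum]
        refine good_mono ?_ (good_S1 hS1 (ih j₀ s))
        rw [pow_succ]
        nlinarith [hpow]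
      · have hsub : (Finset.univ : Finset (Fin N)) ⊆ {j₁, j₂} ∪ Finset.univ := by
          exact Finset.subset_union_right
        have hsum : (∑ j, ((2:ℂ) • M) r j * ((2:ℂ) ^ L.length * L.prod j s))
            = ∑ j ∈ ({j₁, j₂} : Finset (Fin N)),
                ((2:ℂ) • M) r j * ((2:ℂ) ^ L.length * L.prod j s) := by
          refine (Finset.sum_subset (Finset.subset_univ _) (fun x _ hx => ?_)).symm
          simp only [Finset.mem_insert, Finset.mem_singleton, not_or] at hx
          rw [hz x hx.1 hx.2, zero_mul]
        rw [hsum, Finset.sum_pair hne]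
        refine good_mono ?_ (good_add (good_S2 hS2a (ih j₁ s)) (good_S2 hS2b (ih j₂ s)))
        rw [pow_succ]
        nlinarith [hpow]

theorem entries_norm_bound (N d : ℕ)
    (G : Fin d → Matrix (Fin N) (Fin N) ℂ)
    (hG : ∀ k, RowCond ((2 : ℂ) • G k)) :
    ∀ r s, ∃ a b c e : ℤ,
      (2 : ℂ) ^ d * ((List.ofFn G).reverse.prod) r s =
        (a : ℂ) + (b : ℂ) * Complex.I + (c : ℂ) * (Real.sqrt 2 : ℂ) +
          (e : ℂ) * Complex.I * (Real.sqrt 2 : ℂ) ∧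
      a ^ 2 + b ^ 2 + 2 * c ^ 2 + 2 * e ^ 2 ≤ 8 ^ d := by
  intro r s
  have hmem : ∀ M ∈ (List.ofFn G).reverse, RowCond ((2 : ℂ) • M) := by
    intro M hM
    rw [List.mem_reverse, List.mem_ofFn] at hM
    obtain ⟨k, hk⟩ := hM
    rw [← hk]
    exact hG k
  have hlen : ((List.ofFn G).reverse).length = d := by simp
  have h := key_list N ((List.ofFn G).reverse) hmem r s
  rw [hlen] at h
  obtain ⟨a, b, c, e, h1, h2⟩ := h
  exact ⟨a, b, c, e, by rw [h1, rt], h2⟩
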